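/- Let G be a finite simple graph with at least one edge and let F be a finite field. Then nd(G) ≤ |F|^{mr(F,G)} ≤ |F|^{nd(G)}. -/

import Mathlib

open scoped Classical

namespace AvgCutRank

variable {V : Type*} {W : Type*}

/-- Local complementation of `G` at a vertex `v`: complement the adjacency inside
the neighborhood of `v`. -/
def localComp (G : SimpleGraph V) (v : V) : SimpleGraph V where
  Adj x y := x ≠ y ∧ (G.Adj x y ↔ ¬(G.Adj v x ∧ G.Adj v y))
  symm := ⟨by
    rintro x y ⟨hxy, h⟩
    refine ⟨hxy.symm, ?_⟩
    rw [G.adj_comm y x, and_comm]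
    exact h⟩
  loopless := ⟨fun x h => h.1 rfl⟩

/-- Two graphs on the same vertex set are locally equivalent if one is obtained from
the other by a sequence of local complementations. -/
def LocallyEquivalent (G H : SimpleGraph V) : Prop :=
  Relation.ReflTransGen (fun A B => ∃ v, B = localComp A v) G H

/-- `H` is (isomorphic to) a vertex-minor of `G`: `H` is isomorphic to an induced
subgraph of a graph locally equivalent to `G`. -/
def IsVertexMinor (H : SimpleGraph W) (G : SimpleGraph V) : Prop :=
  ∃ (G' : SimpleGraph V) (s : Set V), LocallyEquivalent G G' ∧ Nonempty (H ≃g G'.induce s)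

/-- The cut-rank of a set `X` of vertices: the rank over GF(2) of the `X × Xᶜ`
adjacency submatrix. -/
noncomputable def cutRank [Fintype V] [DecidableEq V] (G : SimpleGraph V)
    (X : Finset V) : ℕ :=
  (Matrix.of fun (i : X) (j : (Xᶜ : Finset V)) =>
    if G.Adj i.1 j.1 then (1 : ZMod 2) else 0).rank

/-- The average cut-rank of a graph. -/
noncomputable def avgCutRank [Fintype V] [DecidableEq V] (G : SimpleGraph V) : ℝ :=
  (∑ X : Finset V, (cutRank G X : ℝ)) / 2 ^ Fintype.card V

/-- The maximum cut-rank of a graph. -/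
noncomputable def maxCutRank [Fintype V] [DecidableEq V] (G : SimpleGraph V) : ℕ :=
  Finset.univ.sup (cutRank G)

/-- `x` and `y` are equal or twins: they have the same neighbors outside `{x, y}`. -/
def TwinEq (G : SimpleGraph V) (x y : V) : Prop :=
  x = y ∨ ∀ z, z ≠ x → z ≠ y → (G.Adj x z ↔ G.Adj y z)

/-- `x` and `y` are twins. -/
def IsTwins (G : SimpleGraph V) (x y : V) : Prop :=
  x ≠ y ∧ ∀ z, z ≠ x → z ≠ y → (G.Adj x z ↔ G.Adj y z)

/-- Neighborhood diversity: the number of twin classes. -/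
noncomputable def nd [Fintype V] [DecidableEq V] (G : SimpleGraph V) : ℕ :=
  (Finset.univ.image fun x => Finset.univ.filter fun y => TwinEq G x y).card

/-- The minimum rank of a graph over a field `F`. -/
noncomputable def minRank (F : Type*) [Field F] [Fintype V] [DecidableEq V]
    (G : SimpleGraph V) : ℕ :=
  sInf { r : ℕ | ∃ A : Matrix V V F, A.IsSymm ∧
    (∀ i j, i ≠ j → (A i j ≠ 0 ↔ G.Adj i j)) ∧ A.rank = r }

/-- The clique delta-cover number: the minimum `t` such that the edge set of `G` is the
symmetric difference of the edge sets of `t` complete graphs (given by their vertex sets). -/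
noncomputable def cliqueDeltaCover [Fintype V] [DecidableEq V] (G : SimpleGraph V) : ℕ :=
  sInf { t : ℕ | ∃ S : Fin t → Finset V, ∀ x y : V, x ≠ y →
    (G.Adj x y ↔ Odd (Finset.univ.filter fun i => x ∈ S i ∧ y ∈ S i).card) }

/-- `C` is the vertex set of an attached star in `G`: the subgraph induced on `C` is a
star (with center `c`) all of whose noncentral vertices are leaves of `G`. -/
def IsAttachedStar (G : SimpleGraph V) (C : Set V) : Prop :=
  ∃ c ∈ C, (∃ x ∈ C, x ≠ c) ∧
    ∀ x ∈ C, x ≠ c → G.Adj c x ∧ ∀ y, G.Adj x y → y = c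

/-- Deletion of a vertex: the induced subgraph on the complement of `{v}`. -/
def deleteVert (G : SimpleGraph V) (v : V) : SimpleGraph {w : V // w ≠ v} :=
  SimpleGraph.comap Subtype.val G

/-- Deletion of a finite set of vertices. -/
def deleteVerts (G : SimpleGraph V) (T : Finset V) : SimpleGraph {w : V // w ∉ T} :=
  SimpleGraph.comap Subtype.val G

/-- The star `K_{1,m}` with center `0`. -/
def starGraph (m : ℕ) : SimpleGraph (Fin (m + 1)) :=
  SimpleGraph.fromRel fun x _ => x = 0

/-- The disjoint union of three copies of `K₂`. -/
def threeK2 : SimpleGraph (Fin 6) :=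
  SimpleGraph.fromRel fun x y =>
    (x = 0 ∧ y = 1) ∨ (x = 2 ∧ y = 3) ∨ (x = 4 ∧ y = 5)

/-- The disjoint union of two paths on three vertices. -/
def twoP3 : SimpleGraph (Fin 6) :=
  SimpleGraph.fromRel fun x y =>
    (x = 0 ∧ y = 1) ∨ (x = 1 ∧ y = 2) ∨ (x = 3 ∧ y = 4) ∨ (x = 4 ∧ y = 5)

/-- The disjoint union of `K₂` and the star `K_{1,k+1}`. -/
def K2PlusStar (k : ℕ) : SimpleGraph (Fin (k + 4)) :=
  SimpleGraph.fromRel fun x y => (x.val = 0 ∧ y.val = 1) ∨ (x.val = 2 ∧ 3 ≤ y.val)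

/-- `E_k`: the star `K_{1,k+1}` with one edge subdivided. Vertex `0` is the center,
`1` is the subdivision vertex, `2` is the leaf behind it, `3, …, k+2` are leaves. -/
def Egraph (k : ℕ) : SimpleGraph (Fin (k + 3)) :=
  SimpleGraph.fromRel fun x y =>
    (x.val = 0 ∧ y.val = 1) ∨ (x.val = 1 ∧ y.val = 2) ∨ (x.val = 0 ∧ 3 ≤ y.val)

/-- Finite graphs represented on the vertex sets `Fin n`. -/
abbrev GraphOn := Σ n : ℕ, SimpleGraph (Fin n)

/-- `H` is isomorphic to an induced subgraph of `G`. -/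
def IsIndSubgraph (H G : GraphOn) : Prop :=
  ∃ s : Set (Fin G.1), Nonempty (H.2 ≃g G.2.induce s)

/-- The sequence `x_n(ε)` from the paper. -/
noncomputable def xseq (ε : ℝ) : ℕ → ℤ
  | 0 => max ⌊2 - Real.logb 2 (1 - ε)⌋ 5
  | n + 1 => 2 ^ (8 * (n + 1) + 10) *
      ⌊(xseq ε n : ℝ) - Real.logb 2 (1 - Int.fract ((2 : ℝ) ^ (xseq ε n) * ε / 2)) + 1⌋


section Stmt3Aux

theorem twinEq_refl (G : SimpleGraph V) (x : V) : TwinEq G x x := Or.inl rfl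

theorem twinEq_symm {G : SimpleGraph V} {x y : V} (h : TwinEq G x y) : TwinEq G y x := by
  rcases h with h | h
  · exact Or.inl h.symm
  · exact Or.inr fun z hzy hzx => (h z hzx hzy).symm

theorem twinEq_trans {G : SimpleGraph V} {x y z : V} (hxy : TwinEq G x y)
    (hyz : TwinEq G y z) : TwinEq G x z := by
  rcases hxy with rfl | hxy
  · exact hyz
  rcases hyz with rfl | hyz
  · exact Or.inr hxy
  by_cases hxz : x = z
  · exact Or.inl hxz
  refine Or.inr fun w hwx hwz => ?_
  by_cases hwy : w = y
  · subst hwy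
    have h1 : G.Adj w x ↔ G.Adj z x := hyz x (Ne.symm hwx) hxz
    have h2 : G.Adj x z ↔ G.Adj w z := hxy z (fun h => hxz h.symm) (Ne.symm hwz)
    rw [G.adj_comm x w, h1, G.adj_comm z x, h2, G.adj_comm w z]
  · exact (hxy w hwx hwy).trans (hyz w hwy hwz)

/-- The twin class of a vertex. -/
noncomputable def twinClass [Fintype V] [DecidableEq V] (G : SimpleGraph V) (x : V) :
    Finset V :=
  Finset.univ.filter fun y => TwinEq G x y

theorem twinClass_eq_iff [Fintype V] [DecidableEq V] {G : SimpleGraph V} {x y : V} :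
    twinClass G x = twinClass G y ↔ TwinEq G x y := by
  constructor
  · intro h
    have : y ∈ twinClass G y := by simp [twinClass, twinEq_refl]
    rw [← h] at this
    simpa [twinClass] using this
  · intro h
    ext z
    simp only [twinClass, Finset.mem_filter, Finset.mem_univ, true_and]
    exact ⟨fun hz => twinEq_trans (twinEq_symm h) hz, fun hz => twinEq_trans h hz⟩

theorem nd_eq_card_image [Fintype V] [DecidableEq V] (G : SimpleGraph V) :
    nd G = (Finset.univ.image (twinClass G)).card := rfl

theorem twin_adj_det {G : SimpleGraph V} {i j k : V} (h1 : TwinEq G i j)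
    (h2 : TwinEq G i k) (hij : i ≠ j) (hik : i ≠ k) : (G.Adj i j ↔ G.Adj i k) := by
  by_cases hjk : j = k
  · subst hjk; exact Iff.rfl
  have hjk' : TwinEq G j k := twinEq_trans (twinEq_symm h1) h2
  rcases hjk' with h | h
  · exact absurd h hjk
  have := h i hij hik
  rw [G.adj_comm i j, this, G.adj_comm k i]

/-- `1` if `P` holds, `0` otherwise. -/
noncomputable def indF (F : Type*) [Field F] (P : Prop) : F := if P then 1 else 0

theorem indF_congr {F : Type*} [Field F] {P Q : Prop} (h : P ↔ Q) :
    indF F P = indF F Q := by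
  unfold indF
  by_cases hp : P
  · rw [if_pos hp, if_pos (h.mp hp)]
  · rw [if_neg hp, if_neg (fun hq => hp (h.mpr hq))]

theorem indF_ne_zero {F : Type*} [Field F] {P : Prop} : indF F P ≠ 0 ↔ P := by
  unfold indF
  by_cases hp : P
  · simp [hp]
  · simp [hp]

/-- A canonical symmetric matrix realizing the adjacency pattern, whose rows are
constant on twin classes. -/
noncomputable def twinMat (F : Type*) [Field F] (G : SimpleGraph V) : Matrix V V F :=
  Matrix.of fun i j =>
    if TwinEq G i j then indF F (∃ k, k ≠ i ∧ TwinEq G i k ∧ G.Adj i k)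
    else indF F (G.Adj i j)

theorem twin_cl_iff {G : SimpleGraph V} {i j : V} (h : TwinEq G i j) (hij : i ≠ j) :
    (∃ k, k ≠ i ∧ TwinEq G i k ∧ G.Adj i k) ↔ G.Adj i j := by
  constructor
  · rintro ⟨k, hki, htk, hak⟩
    exact (twin_adj_det h htk hij (Ne.symm hki)).mpr hak
  · intro ha
    exact ⟨j, Ne.symm hij, h, ha⟩

theorem twinMat_apply_twin {F : Type*} [Field F] {G : SimpleGraph V} {i j : V}
    (h : TwinEq G i j) (hij : i ≠ j) : twinMat F G i j = indF F (G.Adj i j) := by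
  simp only [twinMat, Matrix.of_apply, if_pos h]
  exact indF_congr (twin_cl_iff h hij)

theorem twinMat_apply_notTwin {F : Type*} [Field F] {G : SimpleGraph V} {i j : V}
    (h : ¬ TwinEq G i j) : twinMat F G i j = indF F (G.Adj i j) := by
  simp only [twinMat, Matrix.of_apply, if_neg h]

theorem twinMat_apply_ne {F : Type*} [Field F] {G : SimpleGraph V} {i j : V}
    (hij : i ≠ j) : twinMat F G i j = indF F (G.Adj i j) := by
  by_cases h : TwinEq G i j
  · exact twinMat_apply_twin h hij
  · exact twinMat_apply_notTwin h

theorem twinMat_isSymm {F : Type*} [Field F] (G : SimpleGraph V) :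
    (twinMat F G).IsSymm := by
  refine Matrix.IsSymm.ext fun i j => ?_
  by_cases hij : i = j
  · subst hij; rfl
  · rw [twinMat_apply_ne (Ne.symm hij), twinMat_apply_ne hij]
    exact indF_congr (G.adj_comm j i)

theorem twinMat_cond {F : Type*} [Field F] (G : SimpleGraph V) :
    ∀ i j, i ≠ j → (twinMat F G i j ≠ 0 ↔ G.Adj i j) := by
  intro i j hij
  rw [twinMat_apply_ne hij]
  exact indF_ne_zero

theorem twinMat_row_eq {F : Type*} [Field F] {G : SimpleGraph V} {x y : V}
    (h : TwinEq G x y) : twinMat F G x = twinMat F G y := by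
  by_cases hxy : x = y
  · subst hxy; rfl
  funext j
  by_cases hxj : TwinEq G x j
  · have hyj : TwinEq G y j := twinEq_trans (twinEq_symm h) hxj
    by_cases hjx : x = j
    · subst hjx
      -- twinMat x x vs twinMat y x
      rw [twinMat_apply_ne (Ne.symm hxy)]
      simp only [twinMat, Matrix.of_apply, if_pos (twinEq_refl G x)]
      have h1 : (∃ k, k ≠ x ∧ TwinEq G x k ∧ G.Adj x k) ↔ G.Adj x y :=
        twin_cl_iff h hxy
      rw [indF_congr h1]
      exact indF_congr (G.adj_comm x y)
    · by_cases hjy : y = j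
      · subst hjy
        rw [twinMat_apply_ne hjx]
        simp only [twinMat, Matrix.of_apply, if_pos (twinEq_refl G y)]
        have h1 : (∃ k, k ≠ y ∧ TwinEq G y k ∧ G.Adj y k) ↔ G.Adj y x :=
          twin_cl_iff (twinEq_symm h) (Ne.symm hxy)
        rw [indF_congr h1]
        exact indF_congr (G.adj_comm x y)
      · rw [twinMat_apply_ne hjx, twinMat_apply_ne hjy]
        refine indF_congr ?_
        rcases h with h | h
        · exact absurd h hxy
        · exact h j (Ne.symm hjx) (Ne.symm hjy)
  · have hyj : ¬ TwinEq G y j := fun hyj => hxj (twinEq_trans h hyj)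
    have hjx : x ≠ j := fun e => hxj (e ▸ twinEq_refl G x)
    have hjy : y ≠ j := fun e => hyj (e ▸ twinEq_refl G y)
    rw [twinMat_apply_ne hjx, twinMat_apply_ne hjy]
    refine indF_congr ?_
    rcases h with h | h
    · exact absurd h hxy
    · exact h j (Ne.symm hjx) (Ne.symm hjy)

theorem card_image_le_of_factor {α β γ : Type*} [Fintype α] [DecidableEq β] [DecidableEq γ]
    (f : α → β) (g : α → γ) (h : ∀ a b, g a = g b → f a = f b) :
    (Finset.univ.image f).card ≤ (Finset.univ.image g).card := by
  rcases isEmpty_or_nonempty α with hα | hα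
  · simp
  have hβ : Nonempty β := ⟨f (Classical.arbitrary α)⟩
  set φ : γ → β := fun c =>
    if hc : ∃ a, g a = c then f hc.choose else Classical.arbitrary β with hφ
  refine Finset.card_le_card_of_surjOn φ ?_
  intro b hb
  simp only [Finset.coe_image, Finset.coe_univ, Set.image_univ, Set.mem_range] at hb
  obtain ⟨a, rfl⟩ := hb
  refine ⟨g a, by simp, ?_⟩
  have hc : ∃ a', g a' = g a := ⟨a, rfl⟩
  simp only [hφ, dif_pos hc]
  exact h _ _ hc.choose_spec

theorem minRank_le_nd {F : Type} [Field F] [Fintype V] [DecidableEq V]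
    (G : SimpleGraph V) : minRank F G ≤ nd G := by
  have hmem : (twinMat F G).rank ∈ { r : ℕ | ∃ A : Matrix V V F, A.IsSymm ∧
      (∀ i j, i ≠ j → (A i j ≠ 0 ↔ G.Adj i j)) ∧ A.rank = r } :=
    ⟨twinMat F G, twinMat_isSymm G, twinMat_cond G, rfl⟩
  refine le_trans (Nat.sInf_le hmem) ?_
  rw [Matrix.rank_eq_finrank_span_row]
  refine le_trans (finrank_span_le_card (R := F) _) ?_
  rw [Set.toFinset_range]
  rw [nd_eq_card_image]
  exact card_image_le_of_factor (fun x => (twinMat F G : Matrix V V F) x)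
    (twinClass G) (fun a b hab => twinMat_row_eq (twinClass_eq_iff.mp hab))

end Stmt3Aux

/-- For a graph with at least one edge and a finite field `F`,
`nd(G) ≤ |F|^(mr(F,G)) ≤ |F|^(nd(G))`. -/
theorem stmt3 {V F : Type} [Fintype V] [DecidableEq V] [Field F] [Fintype F]
    (G : SimpleGraph V) (hE : ∃ x y, G.Adj x y) :
    nd G ≤ Fintype.card F ^ minRank F G ∧
    Fintype.card F ^ minRank F G ≤ Fintype.card F ^ nd G := by
  classical
  have hF1 : 1 ≤ Fintype.card F := Fintype.card_pos
  refine ⟨?_, Nat.pow_le_pow_right hF1 (minRank_le_nd G)⟩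
  have hne : { r : ℕ | ∃ A : Matrix V V F, A.IsSymm ∧
      (∀ i j, i ≠ j → (A i j ≠ 0 ↔ G.Adj i j)) ∧ A.rank = r }.Nonempty :=
    ⟨(twinMat F G).rank, twinMat F G, twinMat_isSymm G, twinMat_cond G, rfl⟩
  obtain ⟨A, hsymm, hcond, hrank⟩ := Nat.sInf_mem hne
  have hrank' : A.rank = minRank F G := hrank
  rw [← hrank']
  rw [nd_eq_card_image]
  have key : ∀ x y : V, A x = A y → twinClass G x = twinClass G y := by
    intro x y hxy
    refine twinClass_eq_iff.mpr ?_
    by_cases h : x = y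
    · exact Or.inl h
    refine Or.inr fun z hzx hzy => ?_
    have hA : A x z = A y z := congrFun hxy z
    rw [← hcond x z (Ne.symm hzx), ← hcond y z (Ne.symm hzy), hA]
  refine le_trans (card_image_le_of_factor (twinClass G) (fun x => A x) key) ?_
  have hsub : (Finset.univ.image fun x => A x) ⊆
      (Submodule.span F (Set.range A) : Set (V → F)).toFinset := by
    intro v hv
    simp only [Finset.mem_image, Finset.mem_univ, true_and] at hv
    obtain ⟨x, rfl⟩ := hv
    simp only [Set.mem_toFinset, SetLike.mem_coe]
    exact Submodule.subset_span ⟨x, rfl⟩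
  refine le_trans (Finset.card_le_card hsub) ?_
  rw [Set.toFinset_card, Matrix.rank_eq_finrank_span_row]
  exact le_of_eq (Module.card_eq_pow_finrank (K := F))

end AvgCutRank
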